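/- Failure of GLT(k) in the finite: for the vocabulary τ = {≤, S, P, c, d} (≤, S binary relation symbols, P a unary relation symbol, c, d constant symbols) and for each natural number k, there is an FO(τ) sentence that is k-hereditary over the class 𝒮 of all finite τ-structures but is not equivalent over 𝒮 to any ∃^k∀* sentence. -/

import Mathlib

open FirstOrder Language

namespace LTFinite

/-- Relation symbols of the vocabulary `τ = {≤, S, P, c, d}`: binary `≤` and `S`, unary `P`. -/
inductive TauRel : ℕ → Type
  | le : TauRel 2
  | succ : TauRel 2
  | pelt : TauRel 1

/-- Function symbols of `τ`: the constant symbols `c` and `d`. -/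
inductive TauFun : ℕ → Type
  | c : TauFun 0
  | d : TauFun 0

/-- The vocabulary `τ = {≤, S, P, c, d}` with binary relation symbols `≤` and `S`, a unary
relation symbol `P`, and constant symbols `c` and `d`. -/
def tau : FirstOrder.Language := ⟨TauFun, TauRel⟩

/-- Universally quantify over the last `n` free (de Bruijn) variables of a bounded formula,
leaving the first `k` variables free. -/
def allsFrom (k : ℕ) : ∀ {n : ℕ}, tau.BoundedFormula Empty (k + n) → tau.BoundedFormula Empty k
  | 0, ψ => ψ
  | _ + 1, ψ => allsFrom k ψ.all

/-- The `∃^k∀*` sentence `∃x₁…∃x_k ∀y₁…∀y_n ψ` built from a quantifier-free matrix `ψ`. -/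
def existsForallSentence (k n : ℕ) (ψ : tau.BoundedFormula Empty (k + n)) : tau.Sentence :=
  (allsFrom k ψ).exs

/-! ### Semantic abbreviations -/

variable (M : Type*) [tau.Structure M]

def cM : M := Structure.funMap (L := tau) TauFun.c Fin.elim0
def dM : M := Structure.funMap (L := tau) TauFun.d Fin.elim0

variable {M}

def leM (a b : M) : Prop := Structure.RelMap (L := tau) TauRel.le ![a, b]
def sM (a b : M) : Prop := Structure.RelMap (L := tau) TauRel.succ ![a, b]
def pM (a : M) : Prop := Structure.RelMap (L := tau) TauRel.pelt ![a]

lemma funMap_c (v : Fin 0 → M) : Structure.funMap (L := tau) TauFun.c v = cM M := by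
  unfold cM; congr 1; funext i; exact i.elim0

lemma funMap_d (v : Fin 0 → M) : Structure.funMap (L := tau) TauFun.d v = dM M := by
  unfold dM; congr 1; funext i; exact i.elim0

variable (M)

def SemAlpha : Prop :=
  (∀ a b c : M, leM a b → leM b c → leM a c) ∧
  (∀ a b : M, leM a b → leM b a → a = b) ∧
  (∀ a b : M, leM a b ∨ leM b a) ∧
  (∀ a : M, leM (cM M) a ∧ leM a (dM M)) ∧
  (∀ a b z : M, sM a b → leM a b ∧ a ≠ b ∧ (leM a z → a ≠ z → leM b z))

def SemBeta : Prop := ∀ a : M, a ≠ dM M → ∃ b : M, sM a b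

def SemTheta (k : ℕ) : Prop :=
  ∃ g : Fin (k + 1) → M, Function.Injective g ∧ ∀ i, pM (g i)

variable {M}

/-! ### Syntax -/

def vt {α : Type} (a : α) : tau.Term α := Term.var a

def cT {α : Type} : tau.Term α := Term.func (L := tau) (l := 0) TauFun.c Fin.elim0
def dT {α : Type} : tau.Term α := Term.func (L := tau) (l := 0) TauFun.d Fin.elim0

def leF {α : Type} (t₁ t₂ : tau.Term α) : tau.Formula α :=
  Relations.formula₂ (L := tau) (TauRel.le) t₁ t₂
def sF {α : Type} (t₁ t₂ : tau.Term α) : tau.Formula α :=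
  Relations.formula₂ (L := tau) (TauRel.succ) t₁ t₂
def pF {α : Type} (t : tau.Term α) : tau.Formula α :=
  Relations.formula₁ (L := tau) (TauRel.pelt) t

noncomputable def alphaS : tau.Sentence :=
  (Formula.iAlls (Fin 3) <| Formula.relabel Sum.inr
    ((leF (vt 0) (vt 1) ⊓ leF (vt 1) (vt 2)).imp (leF (vt 0) (vt 2)))) ⊓
  (Formula.iAlls (Fin 2) <| Formula.relabel Sum.inr
    ((leF (vt 0) (vt 1) ⊓ leF (vt 1) (vt 0)).imp ((vt 0).equal (vt 1)))) ⊓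
  (Formula.iAlls (Fin 2) <| Formula.relabel Sum.inr
    (leF (vt 0) (vt 1) ⊔ leF (vt 1) (vt 0))) ⊓
  (Formula.iAlls (Fin 1) <| Formula.relabel Sum.inr
    (leF cT (vt 0) ⊓ leF (vt 0) dT)) ⊓
  (Formula.iAlls (Fin 3) <| Formula.relabel Sum.inr
    ((sF (vt 0) (vt 1)).imp
      (leF (vt 0) (vt 1) ⊓ (∼((vt 0).equal (vt 1))) ⊓
        ((leF (vt 0) (vt 2) ⊓ ∼((vt 0).equal (vt 2))).imp (leF (vt 1) (vt 2))))))

noncomputable def betaS : tau.Sentence :=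
  Formula.iAlls (Fin 1) <| Formula.relabel Sum.inr
    ((∼((vt 0).equal dT)).imp
      (Formula.iExs (Fin 1) <| Formula.relabel (fun i : Fin 2 => if i = 0 then Sum.inl 0 else Sum.inr 0)
        (sF (vt 0) (vt 1))))

noncomputable def thetaS (k : ℕ) : tau.Sentence :=
  Formula.iExs (Fin (k + 1)) <| Formula.relabel Sum.inr
    ((BoundedFormula.iInf fun i : Fin (k + 1) => pF (vt i)) ⊓
     (BoundedFormula.iInf fun p : Fin (k + 1) × Fin (k + 1) =>
        if p.1 = p.2 then ⊤ else ∼((vt p.1).equal (vt p.2))))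

noncomputable def phiS (k : ℕ) : tau.Sentence := alphaS ⊓ (betaS.imp (thetaS k))

/-! ### Realization lemmas -/

lemma realize_vt {α : Type} (v : α → M) (a : α) : (vt a).realize v = v a := rfl

lemma realize_cT {α : Type} (v : α → M) : (cT (α := α)).realize v = cM M := by
  simp only [cT, Term.realize]; exact funMap_c _

lemma realize_dT {α : Type} (v : α → M) : (dT (α := α)).realize v = dM M := by
  simp only [dT, Term.realize]; exact funMap_d _

lemma realize_equal' {α : Type} {t₁ t₂ : tau.Term α} {v : α → M} {v' : Fin 0 → M} :
    BoundedFormula.Realize (t₁.equal t₂) v v' ↔ t₁.realize v = t₂.realize v := by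
  rw [Subsingleton.elim v' default]
  exact Formula.realize_equal

lemma realize_pF' {α : Type} {t : tau.Term α} {v : α → M} {v' : Fin 0 → M} :
    BoundedFormula.Realize (pF t) v v' ↔ pM (t.realize v) := by
  rw [Subsingleton.elim v' default]
  exact Formula.realize_rel₁

lemma realize_leF {α : Type} {t₁ t₂ : tau.Term α} {v : α → M} :
    (leF t₁ t₂).Realize v ↔ leM (t₁.realize v) (t₂.realize v) := Formula.realize_rel₂

lemma realize_sF {α : Type} {t₁ t₂ : tau.Term α} {v : α → M} :
    (sF t₁ t₂).Realize v ↔ sM (t₁.realize v) (t₂.realize v) := Formula.realize_rel₂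

lemma realize_alphaS : M ⊨ alphaS ↔ SemAlpha M := by
  simp only [alphaS, Sentence.Realize, Formula.realize_inf, Formula.realize_iAlls,
    Formula.realize_imp, Formula.realize_inf, Formula.realize_sup, Formula.realize_not,
    Formula.realize_equal, realize_leF, realize_sF, Formula.realize_rel₂, realize_vt, realize_cT, realize_dT,
    Sum.elim_inr, Formula.realize_relabel, Function.comp_def]
  constructor
  · rintro ⟨⟨⟨⟨h1, h2⟩, h3⟩, h4⟩, h5⟩
    refine ⟨fun a b c hab hbc => ?_, fun a b hab hba => h2 ![a, b] ⟨hab, hba⟩,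
      fun a b => h3 ![a, b], fun a => h4 ![a], fun a b z hs => ?_⟩
    · exact h1 ![a, b, c] ⟨hab, hbc⟩
    · obtain ⟨⟨hle, hne⟩, himp⟩ := h5 ![a, b, z] hs
      exact ⟨hle, hne, fun h1 h2 => himp ⟨h1, h2⟩⟩
  · rintro ⟨h1, h2, h3, h4, h5⟩
    refine ⟨⟨⟨⟨fun i hi => h1 _ _ _ hi.1 hi.2, fun i hi => h2 _ _ hi.1 hi.2⟩,
      fun i => h3 _ _⟩, fun i => h4 _⟩, fun i hs => ?_⟩
    obtain ⟨hle, hne, himp⟩ := h5 _ _ (i 2) hs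
    exact ⟨⟨hle, hne⟩, fun h => himp h.1 h.2⟩

lemma realize_betaS : M ⊨ betaS ↔ SemBeta M := by
  simp only [betaS, Sentence.Realize, Formula.realize_iAlls, Formula.realize_imp,
    Formula.realize_not, Formula.realize_equal, Formula.realize_iExs, realize_sF, Formula.realize_rel₂,
    realize_vt, realize_dT, Sum.elim_inr, Formula.realize_relabel, Function.comp_def]
  constructor
  · intro h a ha
    obtain ⟨i, hi⟩ := h ![a] (by simpa using ha)
    refine ⟨i 0, ?_⟩
    simpa using hi
  · intro h i hi
    obtain ⟨b, hb⟩ := h (i 0) (by simpa using hi)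
    refine ⟨![b], ?_⟩
    simpa using hb

lemma realize_thetaS {k : ℕ} : M ⊨ thetaS k ↔ SemTheta M k := by
  simp only [thetaS, Sentence.Realize, Formula.realize_iExs, Sum.elim_inr,
    Formula.realize_relabel, Function.comp_def]
  constructor
  · rintro ⟨i, hi⟩
    rw [Formula.Realize, BoundedFormula.realize_inf, BoundedFormula.realize_iInf,
      BoundedFormula.realize_iInf] at hi
    obtain ⟨hP, hD⟩ := hi
    refine ⟨i, fun a b hab => ?_, fun l => ?_⟩
    · by_contra hne
      have h2 := hD (a, b)
      rw [if_neg hne, BoundedFormula.realize_not, realize_equal'] at h2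
      exact h2 (by simpa [realize_vt] using hab)
    · have := hP l
      rw [realize_pF'] at this
      simpa [realize_vt] using this
  · rintro ⟨g, hginj, hgP⟩
    refine ⟨g, ?_⟩
    rw [Formula.Realize, BoundedFormula.realize_inf, BoundedFormula.realize_iInf,
      BoundedFormula.realize_iInf]
    constructor
    · intro b
      rw [realize_pF']
      simpa [realize_vt] using hgP b
    · intro p
      by_cases hp : p.1 = p.2
      · rw [if_pos hp]; exact BoundedFormula.realize_top.2 trivial
      · rw [if_neg hp, BoundedFormula.realize_not, realize_equal']
        intro h
        exact hp (hginj (by simpa [realize_vt] using h))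

lemma realize_phiS {k : ℕ} : M ⊨ phiS k ↔ (SemAlpha M ∧ (SemBeta M → SemTheta M k)) := by
  have h : (M ⊨ phiS k) ↔ ((M ⊨ alphaS) ∧ ((M ⊨ betaS) → M ⊨ thetaS k)) := by
    simp only [phiS, Sentence.Realize, Formula.realize_inf, Formula.realize_imp]
  rw [h, realize_alphaS, realize_betaS, realize_thetaS]

/-! ### Quantifier-free transfer -/

lemma term_invariant {M N : Type*} [tau.Structure M] [tau.Structure N] (f : M → N)
    (hfc : f (cM M) = cM N) (hfd : f (dM M) = dM N)
    {m : ℕ} (xs : Fin m → M) (S : Set M)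
    (hS : ∀ i, xs i ∈ S) (hcS : cM M ∈ S) (hdS : dM M ∈ S)
    (v : Empty → M) (v' : Empty → N)
    (t : tau.Term (Empty ⊕ Fin m)) :
    t.realize (Sum.elim v xs) ∈ S ∧
      f (t.realize (Sum.elim v xs)) = t.realize (Sum.elim v' (f ∘ xs)) := by
  induction t with
  | var a =>
    rcases a with e | i
    · exact e.elim
    · exact ⟨hS i, rfl⟩
  | func F args ih =>
    cases F
    · simp only [Term.realize, funMap_c]
      exact ⟨hcS, hfc⟩
    · simp only [Term.realize, funMap_d]
      exact ⟨hdS, hfd⟩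

lemma qf_invariant {M N : Type*} [tau.Structure M] [tau.Structure N] (f : M → N)
    (hfc : f (cM M) = cM N) (hfd : f (dM M) = dM N)
    {m : ℕ} (xs : Fin m → M) (S : Set M)
    (hS : ∀ i, xs i ∈ S) (hcS : cM M ∈ S) (hdS : dM M ∈ S)
    (heq : ∀ a ∈ S, ∀ b ∈ S, a = b ↔ f a = f b)
    (hrel : ∀ {l : ℕ} (R : TauRel l) (w : Fin l → M), (∀ i, w i ∈ S) →
      (Structure.RelMap (L := tau) R w ↔ Structure.RelMap (L := tau) R (f ∘ w)))
    (v : Empty → M) (v' : Empty → N)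
    {ψ : tau.BoundedFormula Empty m} (hψ : ψ.IsQF) :
    (ψ.Realize v xs ↔ ψ.Realize v' (f ∘ xs)) := by
  induction hψ with
  | falsum => exact Iff.rfl
  | @of_isAtomic χ h =>
    cases h with
    | equal t₁ t₂ =>
      obtain ⟨m₁, e₁⟩ := term_invariant f hfc hfd xs S hS hcS hdS v v' t₁
      obtain ⟨m₂, e₂⟩ := term_invariant f hfc hfd xs S hS hcS hdS v v' t₂
      rw [BoundedFormula.realize_bdEqual, BoundedFormula.realize_bdEqual, ← e₁, ← e₂]
      exact heq _ m₁ _ m₂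
    | rel R ts =>
      rw [BoundedFormula.realize_rel, BoundedFormula.realize_rel]
      have hmem : ∀ i, (ts i).realize (Sum.elim v xs) ∈ S :=
        fun i => (term_invariant f hfc hfd xs S hS hcS hdS v v' (ts i)).1
      have h := hrel R (fun i => (ts i).realize (Sum.elim v xs)) hmem
      have hfn : (fun i => (ts i).realize (Sum.elim v' (f ∘ xs))) =
          f ∘ (fun i => (ts i).realize (Sum.elim v xs)) := by
        funext i
        exact ((term_invariant f hfc hfd xs S hS hcS hdS v v' (ts i)).2).symm
      rw [hfn]
      exact h
  | imp h₁ h₂ ih₁ ih₂ =>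
    rw [BoundedFormula.realize_imp, BoundedFormula.realize_imp, ih₁, ih₂]

/-! ### Realizing the ∃^k∀* sentence -/

lemma realize_allsFrom {k : ℕ} : ∀ {n : ℕ} (ψ : tau.BoundedFormula Empty (k + n))
    (v : Empty → M) (xs : Fin k → M),
    ((allsFrom k ψ).Realize v xs ↔ ∀ ys : Fin n → M, ψ.Realize v (Fin.append xs ys))
  | 0, ψ, v, xs => by
    rw [allsFrom]
    have key : ∀ ys : Fin 0 → M, Fin.append xs ys = xs := by
      intro ys
      funext i
      exact Fin.addCases (fun i => Fin.append_left _ _ _) (fun i => i.elim0) i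
    constructor
    · intro h ys
      rw [key]; exact h
    · intro h
      have h2 := h Fin.elim0
      rwa [key] at h2
  | n + 1, ψ, v, xs => by
    rw [allsFrom, realize_allsFrom (ψ.all) v xs]
    constructor
    · intro h ys
      have h2 := h (Fin.init ys)
      rw [BoundedFormula.realize_all] at h2
      have h3 := h2 (ys (Fin.last n))
      rw [← Fin.append_snoc, Fin.snoc_init_self] at h3
      exact h3
    · intro h ys
      rw [BoundedFormula.realize_all]
      intro a
      rw [← Fin.append_snoc]
      exact h (Fin.snoc ys a)

lemma realize_EFS {k n : ℕ} (ψ : tau.BoundedFormula Empty (k + n)) :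
    (M ⊨ existsForallSentence k n ψ) ↔
      ∃ xs : Fin k → M, ∀ ys : Fin n → M, ψ.Realize default (Fin.append xs ys) := by
  rw [existsForallSentence]
  exact Iff.trans BoundedFormula.realize_exs (exists_congr fun xs => realize_allsFrom ψ default xs)

/-! ### Rigidity -/

lemma rigid [Finite M] (hα : SemAlpha M) (T : tau.Substructure M)
    (hβ : ∀ x : M, x ∈ T → x ≠ dM M → ∃ y : M, y ∈ T ∧ sM x y) :
    ∀ x : M, x ∈ T := by
  classical
  obtain ⟨htrans, hanti, htotal, hbounds, hsucc⟩ := hα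
  letI : Preorder M :=
    { le := leM
      le_refl := fun a => (htotal a a).elim id id
      le_trans := htrans }
  letI : PartialOrder M := { le_antisymm := hanti }
  letI : LinearOrder M :=
    { le_total := htotal
      toDecidableLE := fun _ _ => Classical.propDecidable _ }
  letI := Fintype.ofFinite M
  have wf : WellFounded ((· < ·) : M → M → Prop) := (Finite.to_wellFoundedLT).wf
  intro x
  induction x using wf.induction with
  | _ x ih =>
    by_cases hx : x = cM M
    · subst hx
      exact T.fun_mem TauFun.c Fin.elim0 (fun i => i.elim0)
    · have hcx : cM M < x := lt_of_le_of_ne (hbounds x).1 (Ne.symm hx)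
      set F : Finset M := Finset.univ.filter (fun z => z < x) with hF
      have hne : F.Nonempty := ⟨cM M, by simp [hF, hcx]⟩
      set y := F.max' hne with hy
      have hyx : y < x := (Finset.mem_filter.1 (F.max'_mem hne)).2
      have hyT : y ∈ T := ih y hyx
      have hyd : y ≠ dM M := by
        intro h
        exact absurd ((hbounds x).2) (not_le.2 (h ▸ hyx))
      obtain ⟨w, hwT, hsw⟩ := hβ y hyT hyd
      obtain ⟨hlw, hnew, himm⟩ := hsucc y w x hsw
      have hwx : w ≤ x := himm hyx.le hyx.ne
      rcases eq_or_lt_of_le hwx with h | h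
      · exact h ▸ hwT
      · exfalso
        have hwF : w ∈ F := by simp [hF, h]
        have : w ≤ y := F.le_max' w hwF
        exact absurd (lt_of_le_of_ne hlw hnew) (not_lt.2 this)

/-! ### Substructure transfer -/

lemma comp_vec2 {X Y : Type*} (g : X → Y) (a b : X) :
    (fun i => g (![a, b] i)) = ![g a, g b] := by
  funext i
  fin_cases i <;> rfl

lemma comp_vec1 {X Y : Type*} (g : X → Y) (a : X) :
    (fun i => g (![a] i)) = ![g a] := by
  funext i
  fin_cases i <;> rfl

variable {N' : tau.Substructure M}

lemma sub_le_iff (a b : N') : leM a b ↔ leM (a : M) (b : M) := by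
  show Structure.RelMap (L := tau) TauRel.le (fun i => ((![a, b] i : N') : M)) ↔ _
  rw [comp_vec2 (fun x : N' => (x : M)) a b]
  exact Iff.rfl

lemma sub_s_iff (a b : N') : sM a b ↔ sM (a : M) (b : M) := by
  show Structure.RelMap (L := tau) TauRel.succ (fun i => ((![a, b] i : N') : M)) ↔ _
  rw [comp_vec2 (fun x : N' => (x : M)) a b]
  exact Iff.rfl

lemma sub_c : ((cM N' : N') : M) = cM M := by
  show (Structure.funMap (L := tau) TauFun.c (fun i => ((Fin.elim0 i : N') : M))) = cM M
  rw [funMap_c]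

lemma sub_d : ((dM N' : N') : M) = dM M := by
  show (Structure.funMap (L := tau) TauFun.d (fun i => ((Fin.elim0 i : N') : M))) = dM M
  rw [funMap_d]

lemma semAlpha_sub (hα : SemAlpha M) : SemAlpha N' := by
  obtain ⟨h1, h2, h3, h4, h5⟩ := hα
  refine ⟨fun a b c hab hbc => ?_, fun a b hab hba => ?_, fun a b => ?_, fun a => ?_,
    fun a b z hs => ?_⟩
  · rw [sub_le_iff] at *
    exact h1 _ _ _ hab hbc
  · rw [sub_le_iff] at hab hba
    exact Subtype.ext (h2 _ _ hab hba)
  · rw [sub_le_iff, sub_le_iff]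
    exact h3 _ _
  · rw [sub_le_iff, sub_le_iff, sub_c, sub_d]
    exact h4 _
  · rw [sub_s_iff] at hs
    obtain ⟨hle, hne, himm⟩ := h5 (a : M) (b : M) (z : M) hs
    refine ⟨(sub_le_iff a b).2 hle, fun h => hne (by rw [h]), fun hlz hnz => ?_⟩
    rw [sub_le_iff] at hlz ⊢
    exact himm hlz (fun h => hnz (Subtype.ext h))

lemma semBeta_sub_elim (hβ : SemBeta N') :
    ∀ x : M, x ∈ N' → x ≠ dM M → ∃ y : M, y ∈ N' ∧ sM x y := by
  intro x hx hxd
  obtain ⟨b, hb⟩ := hβ ⟨x, hx⟩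
    (fun h => hxd (by rw [← sub_d]; exact congrArg (fun z : N' => (z : M)) h))
  rw [sub_s_iff] at hb
  exact ⟨(b : M), b.2, hb⟩

lemma top_sentence_iff (φ : tau.Sentence) (h : N' = ⊤) : ((N' : Type _) ⊨ φ) ↔ M ⊨ φ := by
  subst h
  exact StrongHomClass.realize_sentence (Substructure.topEquiv (L := tau) (M := M)) φ

/-! ### Heredity -/

lemma hereditary (k : ℕ) (M : Type) [tau.Structure M] [Finite M] [Nonempty M]
    (hM : M ⊨ phiS k) :
    ∃ C : Finset M, C.card ≤ k ∧ ∀ N : tau.Substructure M, (N : Set M).Nonempty →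
      (↑C : Set M) ⊆ (N : Set M) → (N : Type) ⊨ phiS k := by
  obtain ⟨hα, _⟩ := realize_phiS.1 hM
  refine ⟨∅, by simp, fun N _ _ => ?_⟩
  by_cases hβ : SemBeta (N : Type)
  · have hall := rigid hα N (semBeta_sub_elim hβ)
    have hNtop : N = ⊤ := by
      ext x
      simp [hall x, Substructure.mem_top]
    exact (top_sentence_iff (phiS k) hNtop).2 hM
  · exact realize_phiS.2 ⟨semAlpha_sub hα, fun h => absurd h hβ⟩


/-! ### The chain structures -/

@[ext]
structure Pt (L : ℕ) (Q : Set ℕ) : Type where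
  val : ℕ
  vle : val ≤ L

instance (L : ℕ) (Q : Set ℕ) : tau.Structure (Pt L Q) where
  funMap {l} F _ :=
    match F with
    | TauFun.c => ⟨0, Nat.zero_le L⟩
    | TauFun.d => ⟨L, le_rfl⟩
  RelMap {l} R v :=
    match R with
    | TauRel.le => (v 0).val ≤ (v 1).val
    | TauRel.succ => (v 1).val = (v 0).val + 1
    | TauRel.pelt => (v 0).val ∈ Q

variable {L : ℕ} {Q : Set ℕ}

instance : Finite (Pt L Q) :=
  Finite.of_injective (fun x : Pt L Q => (⟨x.val, Nat.lt_succ_of_le x.vle⟩ : Fin (L + 1)))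
    (by intro a b h; ext; exact congrArg Fin.val h)

instance : Nonempty (Pt L Q) := ⟨⟨0, Nat.zero_le L⟩⟩

lemma pt_c : cM (Pt L Q) = ⟨0, Nat.zero_le L⟩ := rfl
lemma pt_d : dM (Pt L Q) = ⟨L, le_rfl⟩ := rfl
lemma pt_le (a b : Pt L Q) : leM a b ↔ a.val ≤ b.val := Iff.rfl
lemma pt_s (a b : Pt L Q) : sM a b ↔ b.val = a.val + 1 := Iff.rfl
lemma pt_p (a : Pt L Q) : pM a ↔ a.val ∈ Q := Iff.rfl

lemma pt_semAlpha : SemAlpha (Pt L Q) := by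
  refine ⟨fun a b c => ?_, fun a b h1 h2 => ?_, fun a b => ?_, fun a => ?_, fun a b z hs => ?_⟩
  · rw [pt_le, pt_le, pt_le]; omega
  · rw [pt_le] at h1 h2; ext; omega
  · rw [pt_le, pt_le]; omega
  · rw [pt_le, pt_le, pt_c, pt_d]
    exact ⟨Nat.zero_le _, a.vle⟩
  · rw [pt_s] at hs
    refine ⟨(pt_le a b).2 (by omega), fun h => by rw [h] at hs; omega, fun h1 h2 => ?_⟩
    rw [pt_le] at h1 ⊢
    have : a.val ≠ z.val := fun h => h2 (Pt.ext h)
    omega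

lemma pt_semBeta : SemBeta (Pt L Q) := by
  intro a ha
  have hd : a.val ≠ L := fun h => ha (by rw [pt_d]; ext; exact h)
  have hlt : a.val < L := lt_of_le_of_ne a.vle hd
  exact ⟨⟨a.val + 1, hlt⟩, (pt_s _ _).2 rfl⟩


lemma exists_unmarked_below (X : Finset ℕ) (e q : ℕ) (hX : X.card < e) (hq : e ≤ q) :
    ∃ u, q - e ≤ u ∧ u < q ∧ u ∉ X := by
  by_contra h
  push_neg at h
  have hsub : Finset.Ico (q - e) q ⊆ X := fun w hw => by
    rw [Finset.mem_Ico] at hw; exact h w hw.1 hw.2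
  have := Finset.card_le_card hsub
  rw [Nat.card_Ico] at this
  omega

lemma exists_buffer (X : Finset ℕ) (e q : ℕ) (hX : X.card < e) :
    ∃ v, q ≤ v ∧ v ≤ q + e * (e + 2) ∧ ∀ w, v < w → w ≤ v + e + 1 → w ∉ X := by
  by_contra h
  push_neg at h
  have key : ∀ m : Fin e, ∃ w, q + m.val * (e + 2) < w ∧
      w ≤ q + m.val * (e + 2) + e + 1 ∧ w ∈ X := by
    intro m
    have hm : m.val * (e + 2) ≤ e * (e + 2) := Nat.mul_le_mul_right _ (le_of_lt m.isLt)
    obtain ⟨w, hw1, hw2, hw3⟩ := h (q + m.val * (e + 2)) (by omega) (by omega)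
    exact ⟨w, hw1, by omega, hw3⟩
  choose w hw1 hw2 hw3 using key
  have horder : ∀ m m' : Fin e, m.val < m'.val → w m < w m' := by
    intro m m' hlt
    have h1 := hw1 m'
    have h2 := hw2 m
    have : m.val * (e + 2) + (e + 2) ≤ m'.val * (e + 2) := by
      have h3 : m.val + 1 ≤ m'.val := hlt
      calc m.val * (e + 2) + (e + 2) = (m.val + 1) * (e + 2) := by ring
        _ ≤ m'.val * (e + 2) := Nat.mul_le_mul_right _ h3
    omega
  have hinj : Function.Injective (fun m : Fin e => (⟨w m, hw3 m⟩ : {x // x ∈ X})) := by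
    intro m m' hmm
    have : w m = w m' := congrArg Subtype.val hmm
    by_contra hne
    rcases Nat.lt_or_ge m.val m'.val with hlt | hge
    · exact absurd this (Nat.ne_of_lt (horder _ _ hlt))
    · have hlt' : m'.val < m.val := by
        rcases Nat.lt_or_ge m'.val m.val with hh | hh
        · exact hh
        · exact absurd (Fin.ext (le_antisymm hh hge)) hne
      exact absurd this.symm (Nat.ne_of_lt (horder _ _ hlt'))
  have hcard := Fintype.card_le_of_injective _ hinj
  simp only [Fintype.card_coe, Fintype.card_fin] at hcard
  omega


/-! ### The transfer map between two chains -/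

lemma chain_qf_transfer
    {Lc : ℕ} {QA QB : Set ℕ} {m : ℕ}
    (u v δ : ℕ)
    (f : Pt Lc QA → Pt Lc QB)
    (hfval : ∀ x : Pt Lc QA, (f x).val = if u < x.val ∧ x.val ≤ v then x.val + δ else x.val)
    (X : Finset ℕ)
    (hu : u ∉ X)
    (hgap : ∀ x ∈ X, ¬(v < x ∧ x ≤ v + δ + 1))
    (hδ1 : 1 ≤ δ)
    (hQ : ∀ x ∈ X, ¬(u < x ∧ x ≤ v) → (x ∈ QA ↔ x ∈ QB))
    (hQmid : ∀ x ∈ X, (u < x ∧ x ≤ v) → (x ∉ QA ∧ x + δ ∉ QB))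
    (hu0 : 0 < u)
    (hLv : v < Lc)
    (xs : Fin m → Pt Lc QA) (hXs : ∀ i, (xs i).val ∈ X)
    (h0X : (0 : ℕ) ∈ X) (hLX : Lc ∈ X)
    {ψ : tau.BoundedFormula Empty m} (hψ : ψ.IsQF)
    (v1 : Empty → Pt Lc QA) (v2 : Empty → Pt Lc QB) :
    ψ.Realize v1 xs ↔ ψ.Realize v2 (f ∘ xs) := by
  have key : ∀ a : Pt Lc QA, a.val ∈ X →
      ((f a).val = a.val ∧ (a.val < u ∨ v + δ + 1 < a.val)) ∨
      ((f a).val = a.val + δ ∧ u < a.val ∧ a.val ≤ v) := by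
    intro a ha
    have hne : a.val ≠ u := fun h => hu (h ▸ ha)
    have hg := hgap a.val ha
    by_cases hc : u < a.val ∧ a.val ≤ v
    · exact Or.inr ⟨by rw [hfval, if_pos hc], hc⟩
    · exact Or.inl ⟨by rw [hfval, if_neg hc], by omega⟩
  have hcval : (cM (Pt Lc QA)).val = 0 := rfl
  have hdval : (dM (Pt Lc QA)).val = Lc := rfl
  apply qf_invariant f ?_ ?_ xs {x : Pt Lc QA | x.val ∈ X} hXs h0X hLX ?_ ?_ v1 v2 hψ
  · ext
    rw [hfval]
    rw [if_neg (by omega)]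
    rfl
  · ext
    rw [hfval]
    rw [if_neg (by omega), hdval]
    rfl
  · intro a ha b hb
    rcases key a ha with ⟨ea, ca⟩ | ⟨ea, ca⟩ <;> rcases key b hb with ⟨eb, cb⟩ | ⟨eb, cb⟩ <;>
      (constructor
       · rintro rfl; rfl
       · intro h
         have hv := congrArg Pt.val h
         ext
         omega)
  · intro l R w hw
    cases R with
    | le =>
      show (w 0).val ≤ (w 1).val ↔ (f (w 0)).val ≤ (f (w 1)).val
      rcases key (w 0) (hw 0) with ⟨e0, c0⟩ | ⟨e0, c0⟩ <;>
        rcases key (w 1) (hw 1) with ⟨e1, c1⟩ | ⟨e1, c1⟩ <;> omega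
    | succ =>
      show (w 1).val = (w 0).val + 1 ↔ (f (w 1)).val = (f (w 0)).val + 1
      rcases key (w 0) (hw 0) with ⟨e0, c0⟩ | ⟨e0, c0⟩ <;>
        rcases key (w 1) (hw 1) with ⟨e1, c1⟩ | ⟨e1, c1⟩ <;> omega
    | pelt =>
      show (w 0).val ∈ QA ↔ (f (w 0)).val ∈ QB
      rcases key (w 0) (hw 0) with ⟨e0, c0⟩ | ⟨e0, c0⟩
      · rw [e0]
        exact hQ _ (hw 0) (by omega)
      · rw [e0]
        have := hQmid _ (hw 0) c0
        exact iff_of_false this.1 this.2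


/-! ### Inexpressibility -/

lemma inexpressible (k n : ℕ) (ψ : tau.BoundedFormula Empty (k + n)) (hψ : ψ.IsQF) :
    ∃ (M : Type) (_ : tau.Structure M), Finite M ∧ Nonempty M ∧
      Xor' (M ⊨ phiS k) (M ⊨ existsForallSentence k n ψ) := by
  classical
  obtain ⟨e, he⟩ : ∃ e, e = k + n + 3 := ⟨_, rfl⟩
  obtain ⟨r, hr⟩ : ∃ r, r = e * (e + 3) := ⟨_, rfl⟩
  obtain ⟨Δ, hΔ⟩ : ∃ Δ, Δ = 2 * r + 2 := ⟨_, rfl⟩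
  obtain ⟨Lc, hLc⟩ : ∃ Lc, Lc = (k + 2) * Δ := ⟨_, rfl⟩
  obtain ⟨q, hq⟩ : ∃ q : Fin (k + 1) → ℕ, q = fun l => (l.val + 1) * Δ := ⟨_, rfl⟩
  have he3 : 3 ≤ e := by omega
  have hre : e ≤ r := by
    rw [hr]; exact Nat.le_mul_of_pos_right e (by omega)
  have hprod : e * (e + 2) + e ≤ r := le_of_eq (by rw [hr]; ring)
  have hqΔ : ∀ l, Δ ≤ q l := by
    intro l
    rw [hq]
    exact Nat.le_mul_of_pos_left Δ (by omega)
  have hqL : ∀ l, q l + Δ ≤ Lc := by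
    intro l
    have h1 : (l.val + 2) * Δ ≤ (k + 2) * Δ := Nat.mul_le_mul_right _ (by omega)
    calc q l + Δ = (l.val + 2) * Δ := by rw [hq]; ring
      _ ≤ Lc := by rw [hLc]; exact h1
  have hsep : ∀ l l' : Fin (k + 1), l.val < l'.val → q l + Δ ≤ q l' := by
    intro l l' hll
    have h1 : (l.val + 2) * Δ ≤ (l'.val + 1) * Δ := Nat.mul_le_mul_right _ (by omega)
    calc q l + Δ = (l.val + 2) * Δ := by rw [hq]; ring
      _ ≤ q l' := by rw [hq]; exact h1
  obtain ⟨QB, hQB⟩ : ∃ QB : Set ℕ, QB = Set.range q := ⟨_, rfl⟩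
  -- B satisfies phi
  have hBφ : Pt Lc QB ⊨ phiS k := by
    refine realize_phiS.2 ⟨pt_semAlpha, fun _ => ?_⟩
    refine ⟨fun l => ⟨q l, le_trans (by omega) (hqL l)⟩, ?_, ?_⟩
    · intro a b hab
      have hval : q a = q b := congrArg Pt.val hab
      rw [hq] at hval
      have h2 : a.val + 1 = b.val + 1 := Nat.eq_of_mul_eq_mul_right (by omega) hval
      exact Fin.ext (by omega)
    · intro i
      refine (pt_p _).2 ?_
      rw [hQB]
      exact ⟨i, rfl⟩
  by_cases hyp : Pt Lc QB ⊨ existsForallSentence k n ψ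
  case neg =>
    exact ⟨Pt Lc QB, inferInstance, inferInstance, inferInstance, Or.inl ⟨hBφ, hyp⟩⟩
  case pos =>
  obtain ⟨xs, hall⟩ := (realize_EFS ψ).1 hyp
  -- pick a P-point far from all the witnesses
  have hfar : ∃ j : Fin (k + 1), ∀ i : Fin k,
      (xs i).val + r < q j ∨ q j + r < (xs i).val := by
    by_contra hcon
    push_neg at hcon
    have hcon' : ∀ j : Fin (k + 1), ∃ i : Fin k,
        q j ≤ (xs i).val + r ∧ (xs i).val ≤ q j + r := by
      intro j
      obtain ⟨i, h1, h2⟩ := hcon j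
      exact ⟨i, by omega, by omega⟩
    choose I hI1 hI2 using hcon'
    obtain ⟨j, j', hne, heqI⟩ := Fintype.exists_ne_map_eq_of_card_lt I (by simp)
    have h1 := hI1 j
    have h2 := hI2 j
    have h3 := hI1 j'
    have h4 := hI2 j'
    rw [heqI] at h1 h2
    have hsep' : q j + Δ ≤ q j' ∨ q j' + Δ ≤ q j := by
      rcases Nat.lt_or_ge j.val j'.val with h | h
      · exact Or.inl (hsep j j' h)
      · have hlt : j'.val < j.val :=
          lt_of_le_of_ne h (fun hh => hne (Fin.ext hh.symm))
        exact Or.inr (hsep j' j hlt)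
    omega
  obtain ⟨j, hj⟩ := hfar
  obtain ⟨QA, hQA⟩ : ∃ QA : Set ℕ, QA = QB \ {q j} := ⟨_, rfl⟩
  -- A does not satisfy phi
  have hAnφ : ¬ (Pt Lc QA ⊨ phiS k) := by
    intro hA
    obtain ⟨_, himp⟩ := realize_phiS.1 hA
    obtain ⟨g, hginj, hgP⟩ := himp pt_semBeta
    have hmemQA : ∀ x : ℕ, x ∈ QA ↔ (x ∈ QB ∧ x ≠ q j) := by
      intro x
      rw [hQA, Set.mem_diff, Set.mem_singleton_iff]
    have hmem : ∀ i, (g i).val ∈ QB ∧ (g i).val ≠ q j := by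
      intro i
      exact (hmemQA _).1 ((pt_p (g i)).1 (hgP i))
    have hmem2 : ∀ i, ∃ l : Fin (k + 1), q l = (g i).val := by
      intro i
      have h2 := (hmem i).1
      rw [hQB] at h2
      exact h2
    choose Gl hGl using hmem2
    have hGinj : Function.Injective Gl := by
      intro a b hab
      apply hginj
      ext
      rw [← hGl a, ← hGl b, hab]
    obtain ⟨i, hi⟩ := Finite.surjective_of_injective hGinj j
    exact (hmem i).2 (by rw [← hGl i, hi])
  -- A does satisfy the prenex sentence
  have hAγ : Pt Lc QA ⊨ existsForallSentence k n ψ := by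
    rw [realize_EFS]
    obtain ⟨bA, hbA⟩ : ∃ bA : Fin k → Pt Lc QA,
        bA = fun i => (⟨(xs i).val, (xs i).vle⟩ : Pt Lc QA) := ⟨_, rfl⟩
    have hbAval : ∀ i, (bA i).val = (xs i).val := by
      intro i; rw [hbA]
    refine ⟨bA, fun ys => ?_⟩
    obtain ⟨X, hX⟩ : ∃ X : Finset ℕ, X = ((Finset.univ.image fun i => (xs i).val) ∪
        (Finset.univ.image fun i => (ys i).val)) ∪ {0, Lc} := ⟨_, rfl⟩
    have hXcard : X.card < e := by
      have h1 := Finset.card_union_le ((Finset.univ.image fun i => (xs i).val) ∪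
        (Finset.univ.image fun i => (ys i).val)) ({0, Lc} : Finset ℕ)
      have h2 := Finset.card_union_le (Finset.univ.image fun i => (xs i).val)
        (Finset.univ.image fun i => (ys i).val)
      have h3 := Finset.card_image_le (s := (Finset.univ : Finset (Fin k)))
        (f := fun i => (xs i).val)
      have h4 := Finset.card_image_le (s := (Finset.univ : Finset (Fin n)))
        (f := fun i => (ys i).val)
      have h5 : ({0, Lc} : Finset ℕ).card ≤ 2 :=
        le_trans (Finset.card_insert_le _ _) (by simp)
      simp only [Finset.card_univ, Fintype.card_fin] at h3 h4
      rw [hX]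
      omega
    have h0X : (0 : ℕ) ∈ X := by
      rw [hX]
      exact Finset.mem_union_right _ (by simp)
    have hLcX : Lc ∈ X := by
      rw [hX]
      exact Finset.mem_union_right _ (by simp)
    obtain ⟨u, hu1, hu2, hu3⟩ := exists_unmarked_below X e (q j) hXcard
      (le_trans (by omega) (hqΔ j))
    obtain ⟨δ, hδ⟩ : ∃ δ, δ = q j - u := ⟨_, rfl⟩
    obtain ⟨v, hv1, hv2, hv3⟩ := exists_buffer X e (q j) hXcard
    have hv2L : v + e ≤ q j + r := by
      calc v + e ≤ (q j + e * (e + 2)) + e := Nat.add_le_add_right hv2 e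
        _ = q j + (e * (e + 2) + e) := by ring
        _ ≤ q j + r := Nat.add_le_add_left hprod _
    have hδ1 : 1 ≤ δ := by omega
    have hδe : δ ≤ e := by omega
    have hqjΔ := hqΔ j
    have hqjL := hqL j
    have hvd : v + δ ≤ Lc := by omega
    have hu0 : 0 < u := by omega
    have hLv : v < Lc := by omega
    have hnear : ∀ x : ℕ, x ∈ QB → q j < x + Δ → x < q j + Δ → x = q j := by
      intro x hx hx1 hx2
      rw [hQB] at hx
      obtain ⟨l, hl⟩ := hx
      rcases Nat.lt_trichotomy l.val j.val with h | h | h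
      · have := hsep l j h
        omega
      · rw [← hl, Fin.ext h]
      · have := hsep j l h
        omega
    obtain ⟨f, hfval⟩ : ∃ f : Pt Lc QA → Pt Lc QB,
        ∀ x : Pt Lc QA, (f x).val = if u < x.val ∧ x.val ≤ v then x.val + δ else x.val := by
      refine ⟨fun x => if h : u < x.val ∧ x.val ≤ v then ⟨x.val + δ, by omega⟩
        else ⟨x.val, x.vle⟩, fun x => ?_⟩
      dsimp only
      by_cases h : u < x.val ∧ x.val ≤ v
      · rw [dif_pos h, if_pos h]
      · rw [dif_neg h, if_neg h]
    have hgap' : ∀ x ∈ X, ¬(v < x ∧ x ≤ v + δ + 1) := by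
      intro x hx hcontra
      exact hv3 x hcontra.1 (by omega) hx
    have hmemQA : ∀ x : ℕ, x ∈ QA ↔ (x ∈ QB ∧ x ≠ q j) := by
      intro x
      rw [hQA, Set.mem_diff, Set.mem_singleton_iff]
    have hQ' : ∀ x ∈ X, ¬(u < x ∧ x ≤ v) → (x ∈ QA ↔ x ∈ QB) := by
      intro x _ hnotmid
      rw [hmemQA]
      constructor
      · exact fun h => h.1
      · intro h
        refine ⟨h, fun hcontra => hnotmid (by omega)⟩
    have hQmid' : ∀ x ∈ X, (u < x ∧ x ≤ v) → (x ∉ QA ∧ x + δ ∉ QB) := by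
      intro x _ hmid
      constructor
      · intro hcontra
        rw [hmemQA] at hcontra
        have hx : x = q j := hnear x hcontra.1 (by omega) (by omega)
        exact hcontra.2 hx
      · intro hcontra
        have hx : x + δ = q j := hnear (x + δ) hcontra (by omega) (by omega)
        omega
    have hXs : ∀ i : Fin (k + n), ((Fin.append bA ys) i).val ∈ X := by
      intro i
      refine Fin.addCases (fun i0 => ?_) (fun i0 => ?_) i
      · rw [Fin.append_left, hbAval, hX]
        exact Finset.mem_union_left _ (Finset.mem_union_left _
          (Finset.mem_image_of_mem _ (Finset.mem_univ i0)))
      · rw [Fin.append_right, hX]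
        exact Finset.mem_union_left _ (Finset.mem_union_right _
          (Finset.mem_image_of_mem _ (Finset.mem_univ i0)))
    have transfer := chain_qf_transfer u v δ f hfval X hu3 hgap' hδ1 hQ' hQmid' hu0 hLv
      (Fin.append bA ys) hXs h0X hLcX hψ default default
    have hcomp : f ∘ (Fin.append bA ys) = Fin.append xs (f ∘ ys) := by
      funext i
      refine Fin.addCases (fun i0 => ?_) (fun i0 => ?_) i
      · show f (Fin.append bA ys (Fin.castAdd n i0)) = Fin.append xs (f ∘ ys) (Fin.castAdd n i0)
        rw [Fin.append_left, Fin.append_left]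
        ext
        rw [hfval, hbAval]
        have hji := hj i0
        rw [if_neg (by omega)]
      · show f (Fin.append bA ys (Fin.natAdd k i0)) = Fin.append xs (f ∘ ys) (Fin.natAdd k i0)
        rw [Fin.append_right, Fin.append_right]
        rfl
    rw [transfer, hcomp]
    exact hall (f ∘ ys)
  exact ⟨Pt Lc QA, inferInstance, inferInstance, inferInstance, Or.inr ⟨hAγ, hAnφ⟩⟩


/-- **Failure of `GLT(k)` in the finite**: for the vocabulary `τ = {≤, S, P, c, d}` and each
`k`, there is an `FO(τ)` sentence that is `k`-hereditary over the class `𝒮` of all finite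
`τ`-structures (every finite model has a set of at most `k` elements such that every nonempty
substructure containing it is again a model), but that is not equivalent over `𝒮` to any
`∃^k∀*` sentence: for every such prenex sentence `γ` there is a finite `τ`-structure
satisfying exactly one of the two. -/
theorem failure_glt_k_finite (k : ℕ) :
    ∃ φ : tau.Sentence,
      (∀ (M : Type) [tau.Structure M] [Finite M] [Nonempty M], M ⊨ φ →
        ∃ C : Finset M, C.card ≤ k ∧
          ∀ N : tau.Substructure M, (N : Set M).Nonempty → (C : Set M) ⊆ (N : Set M) →
            (N : Type) ⊨ φ) ∧
      ∀ (n : ℕ) (ψ : tau.BoundedFormula Empty (k + n)), ψ.IsQF →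
        ∃ (M : Type) (_ : tau.Structure M), Finite M ∧ Nonempty M ∧
          Xor' (M ⊨ φ) (M ⊨ existsForallSentence k n ψ) := by
  refine ⟨phiS k, ?_, ?_⟩
  · intro M _ _ _ hM
    exact hereditary k M hM
  · intro n ψ hψ
    exact inexpressible k n ψ hψ

end LTFinite
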